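/- arXiv:2503.14759 — 2 statements merged into one kernel-verified Lean document; each statement's English description precedes it below -/
import Mathlib

section
/- (Birkel's covariance inequality) Let {Y_j}_{j∈I} be a finite collection of positively associated random variables, A, B ⊆ I, and Φ₁ : ℝ^{|A|} → ℝ, Φ₂ : ℝ^{|B|} → ℝ functions with bounded first-order partial derivatives. Then |Cov(Φ₁(Y_i, i∈A), Φ₂(Y_j, j∈B))| ≤ Σ_{i∈A} Σ_{j∈B} ‖∂Φ₁/∂t_i‖_∞ · ‖∂Φ₂/∂t_j‖_∞ · Cov(Y_i, Y_j). -/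
open MeasureTheory ProbabilityTheory

/-- Covariance of two real random variables. -/
noncomputable def cov {Ω : Type*} [MeasurableSpace Ω] (μ : Measure Ω) (U V : Ω → ℝ) : ℝ :=
  (∫ ω, U ω * V ω ∂μ) - (∫ ω, U ω ∂μ) * (∫ ω, V ω ∂μ)

/-- A finite family of random variables is positively associated. -/
def PosAssoc {Ω : Type*} [MeasurableSpace Ω] (μ : Measure Ω) {ι : Type*} [Fintype ι]
    (X : ι → Ω → ℝ) : Prop :=
  ∀ Φ₁ Φ₂ : (ι → ℝ) → ℝ,
    (∀ x y : ι → ℝ, (∀ i, x i ≤ y i) → Φ₁ x ≤ Φ₁ y) →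
    (∀ x y : ι → ℝ, (∀ i, x i ≤ y i) → Φ₂ x ≤ Φ₂ y) →
    MemLp (fun ω => Φ₁ (fun i => X i ω)) 2 μ →
    MemLp (fun ω => Φ₂ (fun i => X i ω)) 2 μ →
    0 ≤ cov μ (fun ω => Φ₁ (fun i => X i ω)) (fun ω => Φ₂ (fun i => X i ω))

section CovLemmas
variable {Ω : Type*} [MeasurableSpace Ω] {μ : Measure Ω} [IsProbabilityMeasure μ]

lemma memL2_integrable {U : Ω → ℝ} (h : MemLp U 2 μ) : Integrable U μ :=
  h.integrable (by norm_num)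

lemma integrable_mul2 {U V : Ω → ℝ} (hU : MemLp U 2 μ) (hV : MemLp V 2 μ) :
    Integrable (fun ω => U ω * V ω) μ := by
  have h : MemLp (U • V) 1 μ := MemLp.smul hV hU (hpqr := ⟨by
    rw [inv_one, ENNReal.inv_two_add_inv_two]⟩)
  exact memLp_one_iff_integrable.mp h

omit [IsProbabilityMeasure μ] in
lemma cov_comm {U V : Ω → ℝ} : cov μ U V = cov μ V U := by
  simp [cov, mul_comm]

omit [IsProbabilityMeasure μ] in
lemma cov_neg_left {U V : Ω → ℝ} : cov μ (fun ω => -U ω) V = -cov μ U V := by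
  simp [cov, integral_neg]
  ring

omit [IsProbabilityMeasure μ] in
lemma cov_neg_right {U V : Ω → ℝ} : cov μ U (fun ω => -V ω) = -cov μ U V := by
  rw [cov_comm, cov_neg_left, cov_comm]

lemma cov_add_left {U U' V : Ω → ℝ} (hU : MemLp U 2 μ) (hU' : MemLp U' 2 μ)
    (hV : MemLp V 2 μ) :
    cov μ (fun ω => U ω + U' ω) V = cov μ U V + cov μ U' V := by
  unfold cov
  have h1 : (∫ ω, (U ω + U' ω) * V ω ∂μ) = (∫ ω, (U ω * V ω + U' ω * V ω) ∂μ) := by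
    congr 1; funext ω; ring
  rw [h1, integral_add (integrable_mul2 hU hV) (integrable_mul2 hU' hV),
    integral_add (memL2_integrable hU) (memL2_integrable hU')]
  ring

lemma cov_add_right {U V V' : Ω → ℝ} (hU : MemLp U 2 μ) (hV : MemLp V 2 μ)
    (hV' : MemLp V' 2 μ) :
    cov μ U (fun ω => V ω + V' ω) = cov μ U V + cov μ U V' := by
  rw [cov_comm, cov_add_left hV hV' hU, cov_comm (U := V), cov_comm (U := V')]

omit [IsProbabilityMeasure μ] in
lemma cov_smul_left {U V : Ω → ℝ} (c : ℝ) :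
    cov μ (fun ω => c * U ω) V = c * cov μ U V := by
  unfold cov
  have h1 : (∫ ω, (c * U ω) * V ω ∂μ) = (∫ ω, c * (U ω * V ω) ∂μ) := by
    congr 1; funext ω; ring
  rw [h1, integral_const_mul, integral_const_mul]
  ring

omit [IsProbabilityMeasure μ] in
lemma cov_smul_right {U V : Ω → ℝ} (c : ℝ) :
    cov μ U (fun ω => c * V ω) = c * cov μ U V := by
  rw [cov_comm, cov_smul_left, cov_comm]

lemma cov_sum_left {κ : Type*} {A : Finset κ} {U : κ → Ω → ℝ} {V : Ω → ℝ}
    (hU : ∀ i ∈ A, MemLp (U i) 2 μ) (hV : MemLp V 2 μ) :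
    cov μ (fun ω => ∑ i ∈ A, U i ω) V = ∑ i ∈ A, cov μ (U i) V := by
  classical
  induction A using Finset.induction_on with
  | empty => simp [cov]
  | @insert k s hkA ih =>
    have h1 : (fun ω => ∑ i ∈ insert k s, U i ω)
        = fun ω => U k ω + ∑ i ∈ s, U i ω := by
      funext ω; rw [Finset.sum_insert hkA]
    rw [h1, cov_add_left (U' := fun ω => ∑ i ∈ s, U i ω) (hU k (Finset.mem_insert_self k s))
      (by
        have h := memLp_finset_sum' (μ := μ) (p := 2) s fun i hi => hU i (Finset.mem_insert_of_mem hi)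
        have he : (fun ω => ∑ i ∈ s, U i ω) = ∑ i ∈ s, U i := by
          funext ω; exact (Finset.sum_apply ω s U).symm
        rw [he]; exact h) hV,
      ih fun i hi => hU i (Finset.mem_insert_of_mem hi), Finset.sum_insert hkA]

lemma memL2_sum_mul {κ : Type*} (A : Finset κ) (D : κ → ℝ) (Y : κ → Ω → ℝ)
    (hY : ∀ i ∈ A, MemLp (Y i) 2 μ) :
    MemLp (fun ω => ∑ i ∈ A, D i * Y i ω) 2 μ := by
  have h := memLp_finset_sum' (μ := μ) (p := 2) A
    (f := fun i => fun ω => D i * Y i ω) (fun i hi => (hY i hi).const_mul (D i))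
  have he : (fun ω => ∑ i ∈ A, D i * Y i ω)
      = ∑ i ∈ A, (fun ω => D i * Y i ω) := by
    funext ω
    exact (Finset.sum_apply ω A (fun i => fun ω' => D i * Y i ω')).symm
  rw [he]; exact h

end CovLemmas

section MonoLemmas
variable {ι : Type*} [Fintype ι] [DecidableEq ι]

lemma mono_of_coord (f : (ι → ℝ) → ℝ)
    (h : ∀ (x : ι → ℝ) (k : ι), Monotone fun s => f (Function.update x k s)) :
    ∀ x y : ι → ℝ, (∀ i, x i ≤ y i) → f x ≤ f y := by
  intro x y hxy
  have key : ∀ s : Finset ι, f x ≤ f (s.piecewise y x) := by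
    intro s
    induction s using Finset.induction_on with
    | empty => simp
    | @insert k s hk ih =>
      refine ih.trans ?_
      rw [Finset.piecewise_insert]
      have h2 : (s.piecewise y x) k = x k := Finset.piecewise_eq_of_notMem _ _ _ hk
      calc f (s.piecewise y x)
          = f (Function.update (s.piecewise y x) k (x k)) := by
            rw [← h2, Function.update_eq_self]
        _ ≤ f (Function.update (s.piecewise y x) k (y k)) := h _ k (hxy k)
  simpa using key Finset.univ

lemma birkel_mono (A : Finset ι)
    (Φ : (ι → ℝ) → ℝ) (dΦ : (ι → ℝ) → ι → ℝ) (D : ι → ℝ)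
    (hA : ∀ x y : ι → ℝ, (∀ i ∈ A, x i = y i) → Φ x = Φ y)
    (hd : ∀ (x : ι → ℝ) (i : ι), i ∈ A →
      HasDerivAt (fun s => Φ (Function.update x i s)) (dΦ x i) (x i))
    (hb : ∀ (x : ι → ℝ) (i : ι), i ∈ A → |dΦ x i| ≤ D i) :
    ∀ x y : ι → ℝ, (∀ i, x i ≤ y i) →
      Φ x + ∑ i ∈ A, D i * x i ≤ Φ y + ∑ i ∈ A, D i * y i := by
  apply mono_of_coord (f := fun x => Φ x + ∑ i ∈ A, D i * x i)
  intro x k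
  by_cases hk : k ∈ A
  · have hfun : (fun s => Φ (Function.update x k s)
          + ∑ i ∈ A, D i * Function.update x k s i)
        = fun s => (Φ (Function.update x k s) + D k * s) + ∑ i ∈ A.erase k, D i * x i := by
      funext s
      have hsum : ∑ i ∈ A, D i * Function.update x k s i
          = D k * s + ∑ i ∈ A.erase k, D i * x i := by
        rw [← Finset.add_sum_erase A _ hk]
        congr 1
        · simp
        · apply Finset.sum_congr rfl
          intro i hi
          rw [Function.update_of_ne (Finset.ne_of_mem_erase hi)]
      rw [hsum]; ring
    rw [hfun]
    apply Monotone.add_const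
    have hF : ∀ s : ℝ, HasDerivAt (fun s => Φ (Function.update x k s) + D k * s)
        (dΦ (Function.update x k s) k + D k) s := by
      intro s
      have h1 := hd (Function.update x k s) k hk
      simp only [Function.update_idem, Function.update_self] at h1
      have h2 : HasDerivAt (fun s : ℝ => D k * s) (D k) s := by
        simpa using (hasDerivAt_id s).const_mul (D k)
      exact h1.add h2
    have hnn : ∀ s : ℝ, 0 ≤ dΦ (Function.update x k s) k + D k := by
      intro s
      have := abs_le.mp (hb (Function.update x k s) k hk)
      linarith [this.1]
    exact monotone_of_deriv_nonneg (fun s => (hF s).differentiableAt)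
      (fun s => by rw [(hF s).deriv]; exact hnn s)
  · have hfun : (fun s => Φ (Function.update x k s)
          + ∑ i ∈ A, D i * Function.update x k s i)
        = fun _ => Φ x + ∑ i ∈ A, D i * x i := by
      funext s
      congr 1
      · exact hA _ _ fun i hi =>
          Function.update_of_ne (by rintro rfl; exact hk hi) _ _
      · apply Finset.sum_congr rfl
        intro i hi
        rw [Function.update_of_ne (by rintro rfl; exact hk hi : i ≠ k)]
    rw [hfun]
    exact monotone_const

end MonoLemmas

/-- **Birkel's covariance inequality.** If `{Y j}` is a positively associated family,
`Φ₁` depends only on coordinates in `A`, `Φ₂` only on coordinates in `B`, and both have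
partial derivatives bounded by `D₁ i` (resp. `D₂ j`), then
`|Cov(Φ₁(Y), Φ₂(Y))| ≤ Σ_{i∈A} Σ_{j∈B} D₁ i · D₂ j · Cov(Y i, Y j)`. -/
theorem birkel_covariance_inequality
    {Ω : Type*} [MeasurableSpace Ω] (μ : Measure Ω) [IsProbabilityMeasure μ]
    {ι : Type*} [Fintype ι] [DecidableEq ι] (Y : ι → Ω → ℝ)
    (hY : PosAssoc μ Y) (hmY : ∀ i, Measurable (Y i))
    (hY2 : ∀ i, MemLp (Y i) 2 μ)
    (A B : Finset ι)
    (Φ₁ Φ₂ : (ι → ℝ) → ℝ)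
    (hA : ∀ x y : ι → ℝ, (∀ i ∈ A, x i = y i) → Φ₁ x = Φ₁ y)
    (hB : ∀ x y : ι → ℝ, (∀ j ∈ B, x j = y j) → Φ₂ x = Φ₂ y)
    (dΦ₁ dΦ₂ : (ι → ℝ) → ι → ℝ) (D₁ D₂ : ι → ℝ)
    (hd₁ : ∀ (x : ι → ℝ) (i : ι), i ∈ A →
      HasDerivAt (fun s => Φ₁ (Function.update x i s)) (dΦ₁ x i) (x i))
    (hd₂ : ∀ (x : ι → ℝ) (j : ι), j ∈ B →
      HasDerivAt (fun s => Φ₂ (Function.update x j s)) (dΦ₂ x j) (x j))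
    (hb₁ : ∀ (x : ι → ℝ) (i : ι), i ∈ A → |dΦ₁ x i| ≤ D₁ i)
    (hb₂ : ∀ (x : ι → ℝ) (j : ι), j ∈ B → |dΦ₂ x j| ≤ D₂ j)
    (hΦ₁2 : MemLp (fun ω => Φ₁ (fun i => Y i ω)) 2 μ)
    (hΦ₂2 : MemLp (fun ω => Φ₂ (fun i => Y i ω)) 2 μ) :
    |cov μ (fun ω => Φ₁ (fun i => Y i ω)) (fun ω => Φ₂ (fun j => Y j ω))|
      ≤ ∑ i ∈ A, ∑ j ∈ B, D₁ i * D₂ j * cov μ (Y i) (Y j) := by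
  classical
  set V₁ : Ω → ℝ := fun ω => Φ₁ (fun i => Y i ω) with hV₁def
  set V₂ : Ω → ℝ := fun ω => Φ₂ (fun i => Y i ω) with hV₂def
  set L₁ : Ω → ℝ := fun ω => ∑ i ∈ A, D₁ i * Y i ω with hL₁def
  set L₂ : Ω → ℝ := fun ω => ∑ j ∈ B, D₂ j * Y j ω with hL₂def
  have hL₁ : MemLp L₁ 2 μ := memL2_sum_mul A D₁ Y fun i _ => hY2 i
  have hL₂ : MemLp L₂ 2 μ := memL2_sum_mul B D₂ Y fun j _ => hY2 j
  -- the four monotone functions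
  have monoG₁ := birkel_mono A Φ₁ dΦ₁ D₁ hA hd₁ hb₁
  have monoH₁ := birkel_mono A (fun x => -Φ₁ x) (fun x i => -dΦ₁ x i) D₁
    (fun x y h => by show -Φ₁ x = -Φ₁ y; rw [hA x y h]) (fun x i hi => (hd₁ x i hi).neg)
    (fun x i hi => by rw [abs_neg]; exact hb₁ x i hi)
  have monoG₂ := birkel_mono B Φ₂ dΦ₂ D₂ hB hd₂ hb₂
  have monoH₂ := birkel_mono B (fun x => -Φ₂ x) (fun x j => -dΦ₂ x j) D₂
    (fun x y h => by show -Φ₂ x = -Φ₂ y; rw [hB x y h]) (fun x j hj => (hd₂ x j hj).neg)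
    (fun x j hj => by rw [abs_neg]; exact hb₂ x j hj)
  -- Memℒp of the four composed functions
  have memG₁ : MemLp (fun ω => V₁ ω + L₁ ω) 2 μ := hΦ₁2.add hL₁
  have memG₂ : MemLp (fun ω => V₂ ω + L₂ ω) 2 μ := hΦ₂2.add hL₂
  have memH₁ : MemLp (fun ω => -V₁ ω + L₁ ω) 2 μ := hΦ₁2.neg.add hL₁
  have memH₂ : MemLp (fun ω => -V₂ ω + L₂ ω) 2 μ := hΦ₂2.neg.add hL₂
  -- positive association gives four covariance inequalities
  have c1 : 0 ≤ cov μ (fun ω => V₁ ω + L₁ ω) (fun ω => V₂ ω + L₂ ω) :=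
    hY (fun x => Φ₁ x + ∑ i ∈ A, D₁ i * x i) (fun x => Φ₂ x + ∑ j ∈ B, D₂ j * x j)
      monoG₁ monoG₂ memG₁ memG₂
  have c2 : 0 ≤ cov μ (fun ω => -V₁ ω + L₁ ω) (fun ω => -V₂ ω + L₂ ω) :=
    hY (fun x => -Φ₁ x + ∑ i ∈ A, D₁ i * x i) (fun x => -Φ₂ x + ∑ j ∈ B, D₂ j * x j)
      monoH₁ monoH₂ memH₁ memH₂
  have c3 : 0 ≤ cov μ (fun ω => V₁ ω + L₁ ω) (fun ω => -V₂ ω + L₂ ω) :=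
    hY (fun x => Φ₁ x + ∑ i ∈ A, D₁ i * x i) (fun x => -Φ₂ x + ∑ j ∈ B, D₂ j * x j)
      monoG₁ monoH₂ memG₁ memH₂
  have c4 : 0 ≤ cov μ (fun ω => -V₁ ω + L₁ ω) (fun ω => V₂ ω + L₂ ω) :=
    hY (fun x => -Φ₁ x + ∑ i ∈ A, D₁ i * x i) (fun x => Φ₂ x + ∑ j ∈ B, D₂ j * x j)
      monoH₁ monoG₂ memH₁ memG₂
  -- expand the covariances bilinearly
  have e1 : cov μ (fun ω => V₁ ω + L₁ ω) (fun ω => V₂ ω + L₂ ω)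
      = cov μ V₁ V₂ + cov μ V₁ L₂ + cov μ L₁ V₂ + cov μ L₁ L₂ := by
    rw [cov_add_left hΦ₁2 hL₁ memG₂, cov_add_right hΦ₁2 hΦ₂2 hL₂,
      cov_add_right hL₁ hΦ₂2 hL₂]
    ring
  have e2 : cov μ (fun ω => -V₁ ω + L₁ ω) (fun ω => -V₂ ω + L₂ ω)
      = cov μ V₁ V₂ - cov μ V₁ L₂ - cov μ L₁ V₂ + cov μ L₁ L₂ := by
    rw [cov_add_left (U := fun ω => -V₁ ω) hΦ₁2.neg hL₁ memH₂,
      cov_add_right (U := fun ω => -V₁ ω) (V := fun ω => -V₂ ω) hΦ₁2.neg hΦ₂2.neg hL₂,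
      cov_add_right (V := fun ω => -V₂ ω) hL₁ hΦ₂2.neg hL₂,
      cov_neg_left, cov_neg_left, cov_neg_right, cov_neg_right]
    ring
  have e3 : cov μ (fun ω => V₁ ω + L₁ ω) (fun ω => -V₂ ω + L₂ ω)
      = -cov μ V₁ V₂ + cov μ V₁ L₂ - cov μ L₁ V₂ + cov μ L₁ L₂ := by
    rw [cov_add_left hΦ₁2 hL₁ memH₂,
      cov_add_right (V := fun ω => -V₂ ω) hΦ₁2 hΦ₂2.neg hL₂,
      cov_add_right (V := fun ω => -V₂ ω) hL₁ hΦ₂2.neg hL₂,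
      cov_neg_right, cov_neg_right]
    ring
  have e4 : cov μ (fun ω => -V₁ ω + L₁ ω) (fun ω => V₂ ω + L₂ ω)
      = -cov μ V₁ V₂ - cov μ V₁ L₂ + cov μ L₁ V₂ + cov μ L₁ L₂ := by
    rw [cov_add_left (U := fun ω => -V₁ ω) hΦ₁2.neg hL₁ memG₂,
      cov_add_right (U := fun ω => -V₁ ω) hΦ₁2.neg hΦ₂2 hL₂,
      cov_add_right hL₁ hΦ₂2 hL₂, cov_neg_left, cov_neg_left]
    ring
  rw [e1] at c1; rw [e2] at c2; rw [e3] at c3; rw [e4] at c4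
  -- compute cov L₁ L₂
  have eL : cov μ L₁ L₂ = ∑ i ∈ A, ∑ j ∈ B, D₁ i * D₂ j * cov μ (Y i) (Y j) := by
    rw [hL₁def, cov_sum_left (fun i _ => (hY2 i).const_mul (D₁ i)) hL₂]
    apply Finset.sum_congr rfl
    intro i _
    rw [cov_comm, hL₂def, cov_sum_left (fun j _ => (hY2 j).const_mul (D₂ j))
      ((hY2 i).const_mul (D₁ i))]
    apply Finset.sum_congr rfl
    intro j _
    rw [cov_smul_left, cov_comm, cov_smul_left]
    ring
  rw [← eL]
  apply abs_le.mpr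
  constructor <;> linarith
end

section
/- Let f, F ∈ C²(ℝ) with F' = f, F(x) < 1 at a fixed point x, λ = f/(1−F), and k a density with ∫ s k(s) ds = 0 and ∫ s² k(s) ds < ∞. Define the smoothed quantities f_h(x) = ∫ k(t) f(x − th) dt and F_h(x) = ∫ k(t) F(x − th) dt. Then as h → 0⁺, f_h(x)/(1−F_h(x)) − λ(x) = (h²/2)·[λ''(x) − 2λ'(x)F'(x)/(1−F(x))]·∫ t²k(t) dt + o(h²). -/
open MeasureTheory Filter Topology Asymptotics

/-- Normalized second-order Taylor remainder of `g` at `x`. -/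
noncomputable def phiR (g : ℝ → ℝ) (x u : ℝ) : ℝ :=
  (g (x - u) - g x + u * deriv g x - u ^ 2 / 2 * deriv (deriv g) x) / u ^ 2

lemma taylor2_bound {g : ℝ → ℝ} (hg1 : Differentiable ℝ g)
    (hg2 : Differentiable ℝ (deriv g)) (x : ℝ) {ε δ : ℝ}
    (hδ : ∀ y, |y - x| ≤ δ → |deriv (deriv g) y - deriv (deriv g) x| ≤ ε)
    {u : ℝ} (hu : |u| ≤ δ) :
    |g (x - u) - g x + u * deriv g x - u ^ 2 / 2 * deriv (deriv g) x| ≤ ε * u ^ 2 := by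
  set ψ : ℝ → ℝ := fun v => g (x - v) - g x + v * deriv g x - v ^ 2 / 2 * deriv (deriv g) x with hψdef
  set ψ' : ℝ → ℝ := fun v => -(deriv g (x - v)) + deriv g x - v * deriv (deriv g) x with hψ'def
  have hcomp : ∀ v : ℝ, HasDerivAt (fun w : ℝ => x - w) (-1 : ℝ) v := fun v => by
    simpa using (hasDerivAt_id v).const_sub x
  have hψd : ∀ v, HasDerivAt ψ (ψ' v) v := by
    intro v
    have h1 : HasDerivAt (fun w => g (x - w)) (deriv g (x - v) * (-1)) v :=
      ((hg1 (x - v)).hasDerivAt).comp v (hcomp v)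
    have h2 : HasDerivAt (fun w : ℝ => w * deriv g x) (1 * deriv g x) v :=
      (hasDerivAt_id v).mul_const _
    have h3 : HasDerivAt (fun w : ℝ => w ^ 2 / 2 * deriv (deriv g) x)
        ((2 : ℕ) * v ^ 1 / 2 * deriv (deriv g) x) v :=
      (((hasDerivAt_pow 2 v).div_const 2).mul_const _)
    have := ((h1.sub_const (g x)).add h2).sub h3
    exact this.congr_deriv (by simp only [hψ'def]; ring)
  have hψ'd : ∀ v, HasDerivAt ψ' (deriv (deriv g) (x - v) - deriv (deriv g) x) v := by
    intro v
    have h1 : HasDerivAt (fun w => deriv g (x - w)) (deriv (deriv g) (x - v) * (-1)) v :=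
      ((hg2 (x - v)).hasDerivAt).comp v (hcomp v)
    have h2 : HasDerivAt (fun w : ℝ => w * deriv (deriv g) x) (1 * deriv (deriv g) x) v :=
      (hasDerivAt_id v).mul_const _
    have := (h1.neg.add_const (deriv g x)).sub h2
    exact this.congr_deriv (by ring)
  have hs : Convex ℝ (Set.Icc (-|u|) (|u|)) := convex_Icc _ _
  have hmem : ∀ v ∈ Set.Icc (-|u|) (|u|), |v| ≤ |u| := fun v hv => abs_le.mpr ⟨hv.1, hv.2⟩
  have h0mem : (0 : ℝ) ∈ Set.Icc (-|u|) (|u|) := by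
    constructor <;> simp [abs_nonneg, neg_nonpos]
  have humem : u ∈ Set.Icc (-|u|) (|u|) := ⟨neg_abs_le u, le_abs_self u⟩
  -- step 1 : |ψ' v| ≤ ε * |u| on the interval
  have step1 : ∀ v ∈ Set.Icc (-|u|) (|u|), ‖ψ' v‖ ≤ ε * |u| := by
    intro v hv
    have hb : ∀ w ∈ Set.Icc (-|u|) (|u|),
        ‖deriv (deriv g) (x - w) - deriv (deriv g) x‖ ≤ ε := by
      intro w hw
      have : |(x - w) - x| ≤ δ := by
        rw [show (x - w) - x = -w by ring, abs_neg]
        exact le_trans (hmem w hw) hu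
      simpa [Real.norm_eq_abs] using hδ (x - w) this
    have := hs.norm_image_sub_le_of_norm_hasDerivWithin_le
      (f := ψ') (f' := fun w => deriv (deriv g) (x - w) - deriv (deriv g) x)
      (fun w hw => (hψ'd w).hasDerivWithinAt) hb h0mem hv
    have hψ'0 : ψ' 0 = 0 := by simp [hψ'def]
    rw [hψ'0, sub_zero, sub_zero] at this
    calc ‖ψ' v‖ ≤ ε * ‖v‖ := this
      _ ≤ ε * |u| := by
        have hε0 : 0 ≤ ε := le_trans (abs_nonneg _) (hδ x (by simpa using (abs_nonneg u).trans hu))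
        exact mul_le_mul_of_nonneg_left (by simpa [Real.norm_eq_abs] using hmem v hv) hε0
  -- step 2 : conclude
  have step2 := hs.norm_image_sub_le_of_norm_hasDerivWithin_le
    (f := ψ) (f' := ψ') (fun w hw => (hψd w).hasDerivWithinAt) step1 h0mem humem
  have hψ0 : ψ 0 = 0 := by simp [hψdef]
  rw [hψ0, sub_zero, sub_zero] at step2
  calc |ψ u| ≤ ε * |u| * ‖u‖ := step2
    _ = ε * u ^ 2 := by rw [Real.norm_eq_abs]; rw [mul_assoc, ← abs_mul]; ring_nf; rw [abs_pow, sq_abs]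

lemma phiR_zero (g : ℝ → ℝ) (x : ℝ) : phiR g x 0 = 0 := by simp [phiR]

lemma phiR_tendsto_zero {g : ℝ → ℝ} (hg1 : Differentiable ℝ g)
    (hg2 : Differentiable ℝ (deriv g)) (hc : Continuous (deriv (deriv g))) (x : ℝ) :
    Tendsto (phiR g x) (𝓝 0) (𝓝 0) := by
  rw [Metric.tendsto_nhds_nhds]
  intro ε hε
  obtain ⟨δ', hδ'pos, hδ'⟩ := Metric.continuousAt_iff.mp (hc.continuousAt (x := x)) (ε / 4)
    (by linarith)
  refine ⟨δ' / 2, by linarith, fun {u} hu => ?_⟩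
  have hδ : ∀ y, |y - x| ≤ δ' / 2 → |deriv (deriv g) y - deriv (deriv g) x| ≤ ε / 4 := by
    intro y hy
    exact le_of_lt (hδ' (show dist y x < δ' by rw [Real.dist_eq]; linarith))
  rcases eq_or_ne u 0 with h0 | h0
  · simp [h0, phiR_zero, hε]
  · have hu' : |u| ≤ δ' / 2 := by
      rw [Real.dist_eq, sub_zero] at hu; linarith
    have hb := taylor2_bound hg1 hg2 x hδ hu'
    have hu2 : (0:ℝ) < u ^ 2 := by positivity
    rw [Real.dist_eq, sub_zero, phiR, abs_div]
    rw [div_lt_iff₀ (by rw [abs_of_pos hu2]; exact hu2)]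
    rw [abs_of_pos hu2]
    calc |g (x - u) - g x + u * deriv g x - u ^ 2 / 2 * deriv (deriv g) x|
        ≤ ε / 4 * u ^ 2 := hb
      _ < ε * u ^ 2 := by nlinarith

lemma phiR_continuous {g : ℝ → ℝ} (hg1 : Differentiable ℝ g)
    (hg2 : Differentiable ℝ (deriv g)) (hc : Continuous (deriv (deriv g))) (x : ℝ) :
    Continuous (phiR g x) := by
  rw [continuous_iff_continuousAt]
  intro u
  rcases eq_or_ne u 0 with h0 | h0
  · rw [h0, ContinuousAt, phiR_zero]
    exact phiR_tendsto_zero hg1 hg2 hc x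
  · apply ContinuousAt.div
    · have hgc : Continuous g := hg1.continuous
      fun_prop
    · fun_prop
    · positivity

lemma phiR_bound {g : ℝ → ℝ} (hg1 : Differentiable ℝ g)
    (hg2 : Differentiable ℝ (deriv g)) (x : ℝ) {M : ℝ}
    (hM : ∀ y, |deriv (deriv g) y| ≤ M) (u : ℝ) :
    |phiR g x u| ≤ 2 * M := by
  have hM0 : 0 ≤ M := le_trans (abs_nonneg _) (hM x)
  rcases eq_or_ne u 0 with h0 | h0
  · rw [h0, phiR_zero]; simp; linarith
  · have hδ : ∀ y, |y - x| ≤ |u| → |deriv (deriv g) y - deriv (deriv g) x| ≤ 2 * M := by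
      intro y _
      calc |deriv (deriv g) y - deriv (deriv g) x| ≤ |deriv (deriv g) y| + |deriv (deriv g) x| :=
            abs_sub _ _
        _ ≤ 2 * M := by have := hM y; have := hM x; linarith
    have hb := taylor2_bound hg1 hg2 x hδ (le_refl |u|)
    have hu2 : (0:ℝ) < u ^ 2 := by positivity
    rw [phiR, abs_div, abs_of_pos hu2, div_le_iff₀ hu2]
    exact hb

lemma contDiff2_parts {g : ℝ → ℝ} (hg : ContDiff ℝ 2 g) :
    Differentiable ℝ g ∧ Differentiable ℝ (deriv g) ∧ Continuous (deriv (deriv g)) := by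
  have h2 : ContDiff ℝ ((1 : WithTop ℕ∞) + 1) g := by
    rw [one_add_one_eq_two]; exact hg
  have h' := (contDiff_succ_iff_deriv.mp h2).2.2
  have h'' := contDiff_one_iff_deriv.mp h'
  exact ⟨hg.differentiable two_ne_zero, h''.1, h''.2⟩

lemma smooth_expand {g k : ℝ → ℝ} (hg : ContDiff ℝ 2 g) {M : ℝ}
    (hM : ∀ y, |deriv (deriv g) y| ≤ M) (x : ℝ)
    (hk_int : Integrable k) (hk_nonneg : ∀ s, 0 ≤ k s) (hk_one : ∫ s, k s = 1)
    (hk_m1_int : Integrable (fun s => s * k s)) (hk_m1 : ∫ s, s * k s = 0)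
    (hk_m2_int : Integrable (fun s => s ^ 2 * k s)) :
    ∃ e : ℝ → ℝ, Tendsto e (𝓝 0) (𝓝 0) ∧
      ∀ h : ℝ, ∫ t, k t * g (x - t * h)
        = g x + h ^ 2 / 2 * deriv (deriv g) x * (∫ t, t ^ 2 * k t) + h ^ 2 * e h := by
  obtain ⟨hg1, hg2, hgc⟩ := contDiff2_parts hg
  have hφc := phiR_continuous hg1 hg2 hgc x
  have hφb := phiR_bound hg1 hg2 x hM
  have hM0 : 0 ≤ M := le_trans (abs_nonneg _) (hM x)
  refine ⟨fun h => ∫ t, phiR g x (t * h) * (t ^ 2 * k t), ?_, ?_⟩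
  · -- tendsto 0 via dominated convergence
    have key := tendsto_integral_filter_of_dominated_convergence (μ := (volume : Measure ℝ))
      (l := 𝓝 (0:ℝ)) (F := fun h t => phiR g x (t * h) * (t ^ 2 * k t))
      (f := fun _ => (0:ℝ)) (bound := fun t => 2 * M * (t ^ 2 * |k t|))
      (Eventually.of_forall fun h =>
        ((hφc.comp (continuous_id.mul continuous_const)).aestronglyMeasurable).mul
          ((continuous_pow 2).aestronglyMeasurable.mul hk_int.aestronglyMeasurable))
      (Eventually.of_forall fun h => Eventually.of_forall fun t => by
        rw [Real.norm_eq_abs, abs_mul, abs_mul, abs_pow, sq_abs]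
        exact mul_le_mul (hφb _) (le_refl _) (by positivity) (by linarith))
      (by
        have : Integrable (fun t => t ^ 2 * |k t|) := by
          simpa [abs_mul, abs_pow, sq_abs, abs_of_nonneg (hk_nonneg _)] using hk_m2_int.abs
        exact this.const_mul _)
      (Eventually.of_forall fun t => by
        have h1 : Tendsto (fun h : ℝ => t * h) (𝓝 0) (𝓝 0) := by
          simpa using (tendsto_id (x := 𝓝 (0:ℝ))).const_mul t
        have h2 := (phiR_tendsto_zero hg1 hg2 hgc x).comp h1
        simpa using h2.mul_const (t ^ 2 * k t))
    simpa using key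
  · intro h
    have hpt : ∀ t, k t * g (x - t * h)
        = k t * g x + (-(h * deriv g x)) * (t * k t)
          + (h ^ 2 / 2 * deriv (deriv g) x) * (t ^ 2 * k t)
          + h ^ 2 * (phiR g x (t * h) * (t ^ 2 * k t)) := by
      intro t
      rcases eq_or_ne (t * h) 0 with h0 | h0
      · have hx0 : x - t * h = x := by rw [h0]; ring
        rcases mul_eq_zero.mp h0 with ht | hh
        · rw [hx0, ht]; simp [phiR_zero]
        · rw [hx0, hh]; simp [phiR_zero]
      · have h2 : (t * h) ^ 2 ≠ 0 := pow_ne_zero 2 h0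
        have ht : t ≠ 0 := left_ne_zero_of_mul h0
        have hh : h ≠ 0 := right_ne_zero_of_mul h0
        rw [phiR]
        field_simp
        ring
    have i1 : Integrable (fun t => k t * g x) := hk_int.mul_const _
    have i2 : Integrable (fun t => (-(h * deriv g x)) * (t * k t)) := hk_m1_int.const_mul _
    have i3 : Integrable (fun t => (h ^ 2 / 2 * deriv (deriv g) x) * (t ^ 2 * k t)) :=
      hk_m2_int.const_mul _
    have i4 : Integrable (fun t => phiR g x (t * h) * (t ^ 2 * k t)) :=
      hk_m2_int.bdd_mul
        ((hφc.comp (continuous_id.mul continuous_const)).aestronglyMeasurable)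
        (Eventually.of_forall fun t => by rw [Real.norm_eq_abs]; exact hφb _)
    have i4' : Integrable (fun t => h ^ 2 * (phiR g x (t * h) * (t ^ 2 * k t))) :=
      i4.const_mul _
    have i12 : Integrable (fun t => k t * g x + (-(h * deriv g x)) * (t * k t)) := i1.add i2
    have i123 : Integrable (fun t => k t * g x + (-(h * deriv g x)) * (t * k t)
        + (h ^ 2 / 2 * deriv (deriv g) x) * (t ^ 2 * k t)) := i12.add i3
    rw [show (fun t => k t * g (x - t * h)) = fun t =>
        k t * g x + (-(h * deriv g x)) * (t * k t)
          + (h ^ 2 / 2 * deriv (deriv g) x) * (t ^ 2 * k t)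
          + h ^ 2 * (phiR g x (t * h) * (t ^ 2 * k t)) from funext hpt]
    rw [integral_add i123 i4', integral_add i12 i3,
      integral_add i1 i2, integral_mul_const, integral_const_mul, integral_const_mul,
      integral_const_mul, hk_one, hk_m1]
    ring

lemma lam_deriv {f F : ℝ → ℝ} (hf : ContDiff ℝ 2 f) (hF : ContDiff ℝ 2 F)
    (hF' : ∀ y, deriv F y = f y) {y : ℝ} (hFy : F y < 1) :
    deriv (fun z => f z / (1 - F z)) y
      = (deriv f y * (1 - F y) + f y ^ 2) / (1 - F y) ^ 2 := by
  have hne : (1 : ℝ) - F y ≠ 0 := sub_ne_zero.mpr (ne_of_lt hFy).symm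
  have hd : HasDerivAt (fun z => 1 - F z) (-(f y)) y := by
    have := ((hF.differentiable two_ne_zero) y).hasDerivAt.const_sub 1
    rwa [hF' y] at this
  have hq := ((hf.differentiable two_ne_zero) y).hasDerivAt.div hd hne
  rw [show (fun z => f z / (1 - F z)) = (f / fun z => 1 - F z) from rfl, hq.deriv]
  ring

lemma lam_deriv2 {f F : ℝ → ℝ} (hf : ContDiff ℝ 2 f) (hF : ContDiff ℝ 2 F)
    (hF' : ∀ y, deriv F y = f y) {x : ℝ} (hFx : F x < 1) :
    deriv (deriv (fun z => f z / (1 - F z))) x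
      = (deriv (deriv f) x * (1 - F x) ^ 2 + 3 * f x * deriv f x * (1 - F x) + 2 * f x ^ 3)
          / (1 - F x) ^ 3 := by
  have hne : (1 : ℝ) - F x ≠ 0 := sub_ne_zero.mpr (ne_of_lt hFx).symm
  obtain ⟨hf1, hf2, _⟩ := contDiff2_parts hf
  have hev : ∀ᶠ y in 𝓝 x, F y < 1 :=
    (hF.continuous.continuousAt).eventually_lt continuousAt_const hFx
  have heq : deriv (fun z => f z / (1 - F z))
      =ᶠ[𝓝 x] fun y => (deriv f y * (1 - F y) + f y ^ 2) / (1 - F y) ^ 2 :=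
    hev.mono fun y hy => lam_deriv hf hF hF' hy
  rw [heq.deriv_eq]
  have hd : HasDerivAt (fun z => 1 - F z) (-(f x)) x := by
    have := ((hF.differentiable two_ne_zero) x).hasDerivAt.const_sub 1
    rwa [hF' x] at this
  have hN : HasDerivAt (fun y => deriv f y * (1 - F y) + f y ^ 2)
      ((deriv (deriv f) x * (1 - F x) + deriv f x * (-(f x))) + 2 * f x ^ 1 * deriv f x) x :=
    (((hf2 x).hasDerivAt.mul hd)).add ((hf1 x).hasDerivAt.pow 2)
  have hD : HasDerivAt (fun y => (1 - F y) ^ 2) (2 * (1 - F x) ^ 1 * (-(f x))) x := hd.pow 2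
  have hq := hN.div hD (pow_ne_zero 2 hne)
  rw [show (fun y => (deriv f y * (1 - F y) + f y ^ 2) / (1 - F y) ^ 2) = ((fun y => deriv f y * (1 - F y) + f y ^ 2) / fun y => (1 - F y) ^ 2) from rfl, hq.deriv]
  field_simp
  ring

lemma bias_algebra {fx D f2 F2 C m2 a b h E : ℝ} (hD : D ≠ 0) (hh : h ≠ 0) (hE : E ≠ 0)
    (hEeq : E = D - h ^ 2 / 2 * F2 * m2 - h ^ 2 * b) :
    ((fx + h ^ 2 / 2 * f2 * m2 + h ^ 2 * a) / E - fx / D - h ^ 2 / 2 * C * m2) / h ^ 2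
      = ((f2 * m2 / 2 + a) * D + fx * (F2 * m2 / 2 + b)) / (E * D) - 1 / 2 * C * m2 := by
  have hnum : (fx + h ^ 2 / 2 * f2 * m2 + h ^ 2 * a) * D - E * fx
      = h ^ 2 * ((f2 * m2 / 2 + a) * D + fx * (F2 * m2 / 2 + b)) := by
    rw [hEeq]; ring
  rw [div_sub_div _ _ hE hD, hnum, sub_div]
  congr 1
  · rw [mul_div_assoc]; exact mul_div_cancel_left₀ _ (pow_ne_zero 2 hh)
  · field_simp


/-- Bias expansion of the smoothed hazard rate: with `λ = f/(1-F)`, `F' = f`, and a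
kernel `k` with zero first moment and finite second moment, the smoothed quantities
`f_h(x) = ∫ k(t) f(x-th) dt` and `F_h(x) = ∫ k(t) F(x-th) dt` satisfy, as `h → 0⁺`,
`f_h(x)/(1-F_h(x)) - λ(x) = (h²/2)[λ''(x) - 2λ'(x)F'(x)/(1-F(x))] ∫ t²k(t)dt + o(h²)`. -/
theorem hazard_bias_expansion
    (f F k : ℝ → ℝ)
    (hf : ContDiff ℝ 2 f) (hF : ContDiff ℝ 2 F)
    (hF' : ∀ y, deriv F y = f y)
    (hbdd : ∃ M : ℝ, ∀ y, |deriv (deriv f) y| ≤ M ∧ |deriv (deriv F) y| ≤ M)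
    (x : ℝ) (hFx : F x < 1)
    (hk_int : Integrable k) (hk_nonneg : ∀ s, 0 ≤ k s) (hk_one : ∫ s, k s = 1)
    (hk_m1_int : Integrable (fun s => s * k s)) (hk_m1 : ∫ s, s * k s = 0)
    (hk_m2_int : Integrable (fun s => s ^ 2 * k s)) :
    (fun h : ℝ =>
        (∫ t, k t * f (x - t * h)) / (1 - ∫ t, k t * F (x - t * h))
          - f x / (1 - F x)
          - h ^ 2 / 2 *
            (deriv (deriv (fun y => f y / (1 - F y))) x
              - 2 * deriv (fun y => f y / (1 - F y)) x * deriv F x / (1 - F x)) *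
            ∫ t, t ^ 2 * k t)
      =o[𝓝[>] (0 : ℝ)] fun h => h ^ 2 := by
  obtain ⟨M, hM⟩ := hbdd
  obtain ⟨ef, hef, heqf⟩ := smooth_expand hf (fun y => (hM y).1) x hk_int hk_nonneg hk_one
    hk_m1_int hk_m1 hk_m2_int
  obtain ⟨eF, heF, heqF⟩ := smooth_expand hF (fun y => (hM y).2) x hk_int hk_nonneg hk_one
    hk_m1_int hk_m1 hk_m2_int
  have hD : (1 : ℝ) - F x ≠ 0 := sub_ne_zero.mpr (ne_of_lt hFx).symm
  have hFf : deriv F = f := funext hF'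
  have hF2 : deriv (deriv F) x = deriv f x := by rw [hFf]
  rw [isLittleO_iff_tendsto' (by
    filter_upwards [self_mem_nhdsWithin] with h hh h2
    exact absurd h2 (pow_ne_zero 2 (ne_of_gt hh)))]
  -- limits of the building blocks along 𝓝[>] 0
  have hh0 : Tendsto (fun h : ℝ => h) (𝓝[>] (0:ℝ)) (𝓝 0) :=
    tendsto_id.mono_left nhdsWithin_le_nhds
  have hsq : Tendsto (fun h : ℝ => h ^ 2) (𝓝[>] (0:ℝ)) (𝓝 0) := by
    simpa using hh0.pow 2
  have hef' : Tendsto ef (𝓝[>] (0:ℝ)) (𝓝 0) := hef.mono_left nhdsWithin_le_nhds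
  have heF' : Tendsto eF (𝓝[>] (0:ℝ)) (𝓝 0) := heF.mono_left nhdsWithin_le_nhds
  have hIF : Tendsto (fun h : ℝ => 1 - ∫ t, k t * F (x - t * h)) (𝓝[>] (0:ℝ))
      (𝓝 (1 - F x)) := by
    have h1 : Tendsto (fun h : ℝ => F x + h ^ 2 / 2 * deriv (deriv F) x * (∫ t, t ^ 2 * k t)
        + h ^ 2 * eF h) (𝓝[>] (0:ℝ)) (𝓝 (F x)) := by
      have h2 : Tendsto (fun h : ℝ => h ^ 2 / 2 * deriv (deriv F) x * (∫ t, t ^ 2 * k t))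
          (𝓝[>] (0:ℝ)) (𝓝 0) := by
        simpa using ((hsq.div_const 2).mul_const (deriv (deriv F) x)).mul_const
          (∫ t, t ^ 2 * k t)
      have h3 : Tendsto (fun h : ℝ => h ^ 2 * eF h) (𝓝[>] (0:ℝ)) (𝓝 0) := by
        simpa using hsq.mul heF'
      simpa using ((tendsto_const_nhds (x := F x)).add h2).add h3
    have : Tendsto (fun h : ℝ => ∫ t, k t * F (x - t * h)) (𝓝[>] (0:ℝ)) (𝓝 (F x)) := by
      refine h1.congr fun h => ?_
      rw [← heqF h]
    simpa using (tendsto_const_nhds (x := (1:ℝ))).sub this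
  have hIFne : ∀ᶠ h in 𝓝[>] (0:ℝ), 1 - (∫ t, k t * F (x - t * h)) ≠ 0 :=
    hIF.eventually_ne hD
  -- eventual identity for the quotient
  have hkey : (fun h : ℝ =>
        ((∫ t, k t * f (x - t * h)) / (1 - ∫ t, k t * F (x - t * h))
          - f x / (1 - F x)
          - h ^ 2 / 2 *
            (deriv (deriv (fun y => f y / (1 - F y))) x
              - 2 * deriv (fun y => f y / (1 - F y)) x * deriv F x / (1 - F x)) *
            ∫ t, t ^ 2 * k t) / h ^ 2)
      =ᶠ[𝓝[>] (0:ℝ)] (fun h : ℝ =>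
        ((deriv (deriv f) x * (∫ t, t ^ 2 * k t) / 2 + ef h) * (1 - F x)
            + f x * (deriv (deriv F) x * (∫ t, t ^ 2 * k t) / 2 + eF h))
          / ((1 - ∫ t, k t * F (x - t * h)) * (1 - F x))
        - 1 / 2 *
            (deriv (deriv (fun y => f y / (1 - F y))) x
              - 2 * deriv (fun y => f y / (1 - F y)) x * deriv F x / (1 - F x)) *
            ∫ t, t ^ 2 * k t) := by
    filter_upwards [hIFne, self_mem_nhdsWithin] with h hne hh
    rw [heqf h]
    exact bias_algebra hD (ne_of_gt hh) hne (by rw [heqF h]; ring)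
  rw [tendsto_congr' hkey]
  -- limit of the right-hand side
  have hNum : Tendsto (fun h : ℝ =>
      (deriv (deriv f) x * (∫ t, t ^ 2 * k t) / 2 + ef h) * (1 - F x)
        + f x * (deriv (deriv F) x * (∫ t, t ^ 2 * k t) / 2 + eF h)) (𝓝[>] (0:ℝ))
      (𝓝 ((deriv (deriv f) x * (∫ t, t ^ 2 * k t) / 2) * (1 - F x)
        + f x * (deriv (deriv F) x * (∫ t, t ^ 2 * k t) / 2))) := by
    have h1 : Tendsto (fun h : ℝ => deriv (deriv f) x * (∫ t, t ^ 2 * k t) / 2 + ef h)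
        (𝓝[>] (0:ℝ)) (𝓝 (deriv (deriv f) x * (∫ t, t ^ 2 * k t) / 2)) := by
      simpa using (tendsto_const_nhds (x := deriv (deriv f) x * (∫ t, t ^ 2 * k t) / 2)).add hef'
    have h2 : Tendsto (fun h : ℝ => deriv (deriv F) x * (∫ t, t ^ 2 * k t) / 2 + eF h)
        (𝓝[>] (0:ℝ)) (𝓝 (deriv (deriv F) x * (∫ t, t ^ 2 * k t) / 2)) := by
      simpa using (tendsto_const_nhds (x := deriv (deriv F) x * (∫ t, t ^ 2 * k t) / 2)).add heF'
    exact (h1.mul_const _).add ((tendsto_const_nhds (x := f x)).mul h2)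
  have hDen : Tendsto (fun h : ℝ => (1 - ∫ t, k t * F (x - t * h)) * (1 - F x)) (𝓝[>] (0:ℝ))
      (𝓝 ((1 - F x) * (1 - F x))) := hIF.mul_const _
  have hfrac := (hNum.div hDen (mul_ne_zero hD hD)).sub_const
    (1 / 2 *
      (deriv (deriv (fun y => f y / (1 - F y))) x
        - 2 * deriv (fun y => f y / (1 - F y)) x * deriv F x / (1 - F x)) *
      ∫ t, t ^ 2 * k t)
  have hzero : ((deriv (deriv f) x * (∫ t, t ^ 2 * k t) / 2) * (1 - F x)
        + f x * (deriv (deriv F) x * (∫ t, t ^ 2 * k t) / 2)) / ((1 - F x) * (1 - F x))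
      - 1 / 2 *
          (deriv (deriv (fun y => f y / (1 - F y))) x
            - 2 * deriv (fun y => f y / (1 - F y)) x * deriv F x / (1 - F x)) *
          (∫ t, t ^ 2 * k t) = 0 := by
    rw [lam_deriv2 hf hF hF' hFx, lam_deriv hf hF hF' hFx, hF' x, hF2]
    field_simp
    ring
  rw [hzero] at hfrac
  exact hfrac
end
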